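/- Suppose nonnegative sequences Υ^k (1 ≤ k ≤ n), positive monotone kernels A^{(n)}_{n-k} (with A^{(n)}_{k-2} ≥ A^{(n)}_{k-1} > 0) and nonnegative numbers G_loc^k, G_his^k satisfy the ECS bound Υ^n ≤ A^{(n)}_0 G_loc^n + Σ_{k=1}^{n-1} (A^{(n)}_{n-k-1} - A^{(n)}_{n-k}) G_his^k for every n ≤ N. Let P^{(n)}_{n-j} be the complementary kernels determined by Σ_{j=k}^{n} P^{(n)}_{n-j} A^{(j)}_{j-k} = 1. Then the global consistency error E^n = Σ_{k=1}^{n} P^{(n)}_{n-k} Υ^k satisfies E^n ≤ Σ_{k=1}^{n} P^{(n)}_{n-k} A^{(k)}_0 G_loc^k + Σ_{k=1}^{n-1} P^{(n)}_{n-k} A^{(k)}_0 G_his^k. -/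

import Mathlib

open Finset

private lemma tri_swap (n : ℕ) (f : ℕ → ℕ → ℝ) :
    (∑ k ∈ Finset.Icc 1 n, ∑ j ∈ Finset.Icc 1 (k - 1), f k j) =
      ∑ j ∈ Finset.Icc 1 (n - 1), ∑ k ∈ Finset.Icc (j + 1) n, f k j := by
  rw [Finset.sum_sigma', Finset.sum_sigma']
  refine sum_nbij' (fun x ↦ ⟨x.2, x.1⟩) (fun x ↦ ⟨x.2, x.1⟩) ?_ ?_ (fun _ _ ↦ rfl) (fun _ _ ↦ rfl)
    (fun _ _ ↦ rfl) <;>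
  simp only [Finset.mem_Icc, Sigma.forall, Finset.mem_sigma] <;>
  rintro a b ⟨⟨h₁, h₂⟩, ⟨h₃, h₄⟩⟩ <;>
  omega

theorem stmt_18 (N : ℕ) (A P : ℕ → ℕ → ℝ) (Υ Gloc Ghis : ℕ → ℝ)
    (hApos : ∀ n j, 1 ≤ n → n ≤ N → j ≤ n - 1 → 0 < A n j)
    (hAmono : ∀ n j, 1 ≤ n → n ≤ N → j + 1 ≤ n - 1 → A n j ≥ A n (j + 1))
    (hΥ : ∀ k, 1 ≤ k → k ≤ N → 0 ≤ Υ k)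
    (hGloc : ∀ k, 1 ≤ k → k ≤ N → 0 ≤ Gloc k)
    (hGhis : ∀ k, 1 ≤ k → k ≤ N → 0 ≤ Ghis k)
    (hECS : ∀ n, 1 ≤ n → n ≤ N →
      Υ n ≤ A n 0 * Gloc n
        + ∑ k ∈ Finset.Icc 1 (n - 1), (A n (n - k - 1) - A n (n - k)) * Ghis k)
    (hPid : ∀ k n, 1 ≤ k → k ≤ n → n ≤ N →
      ∑ j ∈ Finset.Icc k n, P n (n - j) * A j (j - k) = 1) :
    ∀ n, 1 ≤ n → n ≤ N →
      ∑ k ∈ Finset.Icc 1 n, P n (n - k) * Υ k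
        ≤ ∑ k ∈ Finset.Icc 1 n, P n (n - k) * A k 0 * Gloc k
          + ∑ k ∈ Finset.Icc 1 (n - 1), P n (n - k) * A k 0 * Ghis k := by
  -- recursion identity for P
  have hrec : ∀ k n, 1 ≤ k → k < n → n ≤ N →
      P n (n - k) * A k 0
        = ∑ j ∈ Finset.Icc (k + 1) n, P n (n - j) * (A j (j - k - 1) - A j (j - k)) := by
    intro k n hk hkn hn
    have h1 := hPid k n hk hkn.le hn
    have h2 := hPid (k + 1) n (by omega) hkn hn
    have hins : Finset.Icc k n = insert k (Finset.Icc (k + 1) n) := by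
      ext x; simp only [Finset.mem_Icc, Finset.mem_insert]; omega
    rw [hins, Finset.sum_insert (by simp)] at h1
    simp only [Nat.sub_self] at h1
    have hsub : ∀ j, j - (k + 1) = j - k - 1 := fun j => by omega
    simp only [hsub] at h2
    have : (∑ j ∈ Finset.Icc (k + 1) n, P n (n - j) * (A j (j - k - 1) - A j (j - k)))
        = (∑ j ∈ Finset.Icc (k + 1) n, P n (n - j) * A j (j - k - 1))
          - ∑ j ∈ Finset.Icc (k + 1) n, P n (n - j) * A j (j - k) := by
      rw [← Finset.sum_sub_distrib]
      exact Finset.sum_congr rfl fun j _ => by ring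
    rw [this, h2]; linarith
  -- nonnegativity of P
  have hPnn : ∀ n k, 1 ≤ k → k ≤ n → n ≤ N → 0 ≤ P n (n - k) := by
    intro n k hk hkn hn
    obtain ⟨d, hd⟩ : ∃ d, n - k = d := ⟨n - k, rfl⟩
    induction d using Nat.strong_induction_on generalizing k with
    | _ d ih =>
      rcases eq_or_lt_of_le hkn with h | h
      · -- k = n
        have h1 := hPid n n (by omega) le_rfl hn
        rw [Finset.Icc_self, Finset.sum_singleton, Nat.sub_self] at h1
        have hA := hApos n 0 (by omega) hn (by omega)
        subst h
        rw [Nat.sub_self]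
        nlinarith
      · have hA0 : 0 < A k 0 := hApos k 0 hk (by omega) (by omega)
        have hsum : 0 ≤ ∑ j ∈ Finset.Icc (k + 1) n,
            P n (n - j) * (A j (j - k - 1) - A j (j - k)) := by
          apply Finset.sum_nonneg
          intro j hj
          simp only [Finset.mem_Icc] at hj
          have hPj : 0 ≤ P n (n - j) :=
            ih (n - j) (by omega) j (by omega) hj.2 rfl
          have hmono : A j (j - k - 1) ≥ A j (j - k) := by
            have := hAmono j (j - k - 1) (by omega) (by omega) (by omega)
            have heq : j - k - 1 + 1 = j - k := by omega
            rwa [heq] at this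
          exact mul_nonneg hPj (by linarith)
        have := hrec k n hk h hn
        nlinarith
  intro n hn1 hnN
  -- step 1: bound each Υ k
  have step1 : ∑ k ∈ Finset.Icc 1 n, P n (n - k) * Υ k
      ≤ ∑ k ∈ Finset.Icc 1 n, P n (n - k) *
          (A k 0 * Gloc k + ∑ j ∈ Finset.Icc 1 (k - 1), (A k (k - j - 1) - A k (k - j)) * Ghis j) := by
    apply Finset.sum_le_sum
    intro k hk
    simp only [Finset.mem_Icc] at hk
    exact mul_le_mul_of_nonneg_left (hECS k hk.1 (hk.2.trans hnN))
      (hPnn n k hk.1 hk.2 hnN)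
  refine step1.trans ?_
  -- step 2: expand and swap
  have expand : ∑ k ∈ Finset.Icc 1 n, P n (n - k) *
      (A k 0 * Gloc k + ∑ j ∈ Finset.Icc 1 (k - 1), (A k (k - j - 1) - A k (k - j)) * Ghis j)
      = (∑ k ∈ Finset.Icc 1 n, P n (n - k) * A k 0 * Gloc k)
        + ∑ k ∈ Finset.Icc 1 n, ∑ j ∈ Finset.Icc 1 (k - 1),
            P n (n - k) * ((A k (k - j - 1) - A k (k - j)) * Ghis j) := by
    rw [← Finset.sum_add_distrib]
    apply Finset.sum_congr rfl
    intro k _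
    rw [mul_add, Finset.mul_sum, ← mul_assoc]
  rw [expand, tri_swap n (fun k j => P n (n - k) * ((A k (k - j - 1) - A k (k - j)) * Ghis j))]
  apply add_le_add (le_refl _)
  apply le_of_eq
  apply Finset.sum_congr rfl
  intro j hj
  simp only [Finset.mem_Icc] at hj
  have hjn : j < n := by omega
  calc ∑ k ∈ Finset.Icc (j + 1) n, P n (n - k) * ((A k (k - j - 1) - A k (k - j)) * Ghis j)
      = (∑ k ∈ Finset.Icc (j + 1) n, P n (n - k) * (A k (k - j - 1) - A k (k - j))) * Ghis j := by
        rw [Finset.sum_mul]; exact Finset.sum_congr rfl fun k _ => by ring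
    _ = P n (n - j) * A j 0 * Ghis j := by rw [← hrec j n hj.1 hjn hnN]
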